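/- arXiv:2004.12953 — 9 statements merged into one kernel-verified Lean document; each statement's English description precedes it below -/
import Mathlib

section
/- Let C be a set and (X, θ) a contramodule over C (i.e., θ: (C → X) → X satisfies contraunitality: θ of a constant function with value x equals x; and contraassociativity: for every γ: C × C → X, θ(a ↦ θ(b ↦ γ(a,b))) = θ(a ↦ γ(a,a))). Fix u ∈ X and define π_a: X → X by π_a(x) = θ(δ_{a,x}) where δ_{a,x}(b) = x if b = a and u otherwise. Then π_a(π_a(x)) = π_a(x) for all a ∈ C and x ∈ X. -/
/-- For a contramodule `(X, θ)` over a set `C`, with `π_a x = θ (δ_{a,x})`,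
the maps `π_a` are idempotent: `π_a (π_a x) = π_a x`. -/
theorem stmt_2 (C X : Type*) [DecidableEq C] (θ : (C → X) → X)
    (hunit : ∀ x : X, θ (fun _ => x) = x)
    (hassoc : ∀ γ : C → C → X,
      θ (fun a => θ (fun b => γ a b)) = θ (fun a => γ a a))
    (u : X) (π : C → X → X)
    (hπ : ∀ a x, π a x = θ (fun b => if b = a then x else u)) :
    ∀ (a : C) (x : X), π a (π a x) = π a x := by
  intro a x
  have key := hassoc (fun b c => if b = a then (if c = a then x else u) else u)
  rw [hπ, hπ]
  calc θ (fun b => if b = a then θ (fun c => if c = a then x else u) else u)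
      = θ (fun b => θ (fun c => if b = a then (if c = a then x else u) else u)) := by
        congr 1; funext b; by_cases h : b = a <;> simp [h, hunit]
    _ = θ (fun b => if b = a then (if b = a then x else u) else u) := key
    _ = θ (fun b => if b = a then x else u) := by
        congr 1; funext b; by_cases h : b = a <;> simp [h]
end

section
/- Let C be a set, (X, θ) a contramodule over C, and fix u ∈ X. Define π_a(x) = θ(δ_{a,x}) with δ_{a,x}(b) = x if b = a and u otherwise. Then for distinct a, b ∈ C, π_a(π_b(x)) = u for all x ∈ X. -/
/-- For a contramodule `(X, θ)` over a set `C`, with `π_a x = θ (δ_{a,x})`,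
distinct indices give `π_a (π_b x) = u`. -/
theorem stmt_3 (C X : Type*) [DecidableEq C] (θ : (C → X) → X)
    (hunit : ∀ x : X, θ (fun _ => x) = x)
    (hassoc : ∀ γ : C → C → X,
      θ (fun a => θ (fun b => γ a b)) = θ (fun a => γ a a))
    (u : X) (π : C → X → X)
    (hπ : ∀ a x, π a x = θ (fun b => if b = a then x else u)) :
    ∀ (a b : C), a ≠ b → ∀ x : X, π a (π b x) = u := by
  intro a b hab x
  have key : (fun c : C => if c = a then π b x else u)
      = fun c => θ (fun d => if c = a then (if d = b then x else u) else u) := by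
    funext c
    by_cases h : c = a <;> simp [h, hπ, hunit]
  rw [hπ, key, hassoc]
  have : (fun c : C => if c = a then (if c = b then x else u) else u)
      = fun _ => u := by
    funext c
    by_cases h : c = a
    · subst h; simp [hab]
    · simp [h]
  rw [this, hunit]
end

section
/- Let C be a set, (X, θ) a contramodule over C, u ∈ X, and π_a as above. Then for every function β: C → X and every a ∈ C, π_a(θ(β)) = π_a(β(a)). -/
/-- For a contramodule `(X, θ)` over a set `C`, with `π_a x = θ (δ_{a,x})`,
one has `π_a (θ β) = π_a (β a)` for every `β : C → X`. -/
theorem stmt_4 (C X : Type*) [DecidableEq C] (θ : (C → X) → X)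
    (hunit : ∀ x : X, θ (fun _ => x) = x)
    (hassoc : ∀ γ : C → C → X,
      θ (fun a => θ (fun b => γ a b)) = θ (fun a => γ a a))
    (u : X) (π : C → X → X)
    (hπ : ∀ a x, π a x = θ (fun b => if b = a then x else u)) :
    ∀ (β : C → X) (a : C), π a (θ β) = π a (β a) := by
  intro β a
  rw [hπ, hπ]
  have h := hassoc (fun b c => if b = a then β c else u)
  have h1 : (fun b => θ (fun c => if b = a then β c else u)) =
      (fun b => if b = a then θ β else u) := by
    funext b
    by_cases hb : b = a <;> simp [hb, hunit]
  rw [h1] at h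
  rw [h]
  congr 1
  funext b
  by_cases hb : b = a <;> simp [hb]
end

section
/- Let C be a set, (X, θ) a contramodule over C, u ∈ X, π_a(x) = θ(δ_{a,x}) as above, and X_a = image of π_a. If β: C → X satisfies β(a) ∈ X_a for all a ∈ C, then π_a(θ(β)) = β(a) for all a ∈ C. -/
/-- For a contramodule `(X, θ)` over a set `C`, with `π_a x = θ (δ_{a,x})` and
`X_a = range (π_a)`: if `β a ∈ X_a` for all `a`, then `π_a (θ β) = β a`. -/
theorem stmt_5 (C X : Type*) [DecidableEq C] (θ : (C → X) → X)
    (hunit : ∀ x : X, θ (fun _ => x) = x)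
    (hassoc : ∀ γ : C → C → X,
      θ (fun a => θ (fun b => γ a b)) = θ (fun a => γ a a))
    (u : X) (π : C → X → X)
    (hπ : ∀ a x, π a x = θ (fun b => if b = a then x else u))
    (β : C → X) (hβ : ∀ a : C, β a ∈ Set.range (π a)) :
    ∀ a : C, π a (θ β) = β a := by
  intro a
  obtain ⟨x, hx⟩ := hβ a
  have idem : π a (β a) = β a := by
    rw [← hx, hπ, hπ]
    calc θ (fun b => if b = a then θ (fun c => if c = a then x else u) else u)
        = θ (fun b => θ (fun c => if b = a then (if c = a then x else u) else u)) := by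
          congr 1; funext b; split <;> simp [hunit]
      _ = θ (fun b => if b = a then (if b = a then x else u) else u) :=
          hassoc fun b c => if b = a then (if c = a then x else u) else u
      _ = θ (fun b => if b = a then x else u) := by
          congr 1; funext b; split <;> simp_all
  have key : π a (θ β) = π a (β a) := by
    rw [hπ, hπ]
    calc θ (fun b => if b = a then θ β else u)
        = θ (fun b => θ (fun c => if b = a then β c else u)) := by
          congr 1; funext b; split <;> simp [hunit]
      _ = θ (fun b => if b = a then β b else u) := hassoc fun b c => if b = a then β c else u
      _ = θ (fun b => if b = a then β a else u) := by
          congr 1; funext b; split <;> simp_all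
  rw [key, idem]
end

section
/- Let C be a set and (X, θ) a contramodule over C. Then for every x ∈ X, θ(a ↦ π_a(x)) = x, where π_a(x) = θ(δ_{a,x}) is defined with respect to any fixed u ∈ X. Consequently the map π: X → ∏_{a∈C} X_a, x ↦ (π_a(x))_a is injective with left inverse given by the restriction of θ. -/
/-- For a contramodule `(X, θ)` over a set `C`, `θ (fun a => π_a x) = x` for every `x`,
and consequently the map `x ↦ (π_a x)_a` is injective. -/
theorem stmt_6 (C X : Type*) [DecidableEq C] (θ : (C → X) → X)
    (hunit : ∀ x : X, θ (fun _ => x) = x)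
    (hassoc : ∀ γ : C → C → X,
      θ (fun a => θ (fun b => γ a b)) = θ (fun a => γ a a))
    (u : X) (π : C → X → X)
    (hπ : ∀ a x, π a x = θ (fun b => if b = a then x else u)) :
    (∀ x : X, θ (fun a => π a x) = x) ∧
      Function.Injective (fun (x : X) (a : C) => π a x) := by
  have key : ∀ x : X, θ (fun a => π a x) = x := by
    intro x
    have h1 : θ (fun a => π a x)
        = θ (fun a => θ (fun b => if b = a then x else u)) := by
      simp only [hπ]
    rw [h1, hassoc (fun a b => if b = a then x else u)]
    simp [hunit]
  refine ⟨key, ?_⟩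
  intro x y h
  have : θ (fun a => π a x) = θ (fun a => π a y) := by
    exact congrArg θ h
  rwa [key, key] at this
end

section
/- Let C be a set and (X, θ) a nonempty contramodule over C. Fix u ∈ X and define π_a, X_a as above. Then the map π = (π_a)_{a∈C}: X → ∏_{a∈C} X_a and the map σ: ∏_{a∈C} X_a → X given by σ(β) = θ(β) (viewing a family (x_a) with x_a ∈ X_a as a function C → X) are mutually inverse bijections. Moreover, π is an isomorphism of contramodules where ∏_{a∈C} X_a carries the product contramodule structure θ'(β)(a) = β(a)(a). -/
/-- Every nonempty contramodule `(X, θ)` over a set `C` is isomorphic, as a contramodule,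
to the product `∏_{a ∈ C} X_a` of the images `X_a = range (π_a)`, via the mutually inverse
maps `π = (π_a)_a` and `σ = θ` restricted to the product; moreover `π` commutes with the
contramodule structures (the product carrying `θ' β a = β a a`). -/
theorem stmt_7 (C X : Type*) [DecidableEq C] (θ : (C → X) → X)
    (hunit : ∀ x : X, θ (fun _ => x) = x)
    (hassoc : ∀ γ : C → C → X,
      θ (fun a => θ (fun b => γ a b)) = θ (fun a => γ a a))
    (u : X) (π : C → X → X)
    (hπ : ∀ a x, π a x = θ (fun b => if b = a then x else u))
    (π' : X → ∀ a : C, Set.range (π a))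
    (hπ' : ∀ (x : X) (a : C), (π' x a : X) = π a x)
    (σ : (∀ a : C, Set.range (π a)) → X)
    (hσ : ∀ β : ∀ a : C, Set.range (π a), σ β = θ (fun a => (β a : X))) :
    Function.LeftInverse σ π' ∧ Function.RightInverse σ π' ∧
      (∀ β : C → X, π' (θ β) = fun a => π' (β a) a) := by
  -- key lemma: π_a (θ f) = π_a (f a)
  have key : ∀ (a : C) (f : C → X), π a (θ f) = π a (f a) := by
    intro a f
    rw [hπ, hπ]
    have h1 : (fun c => if c = a then θ f else u)
        = fun c => θ (fun b => if c = a then f b else u) := by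
      funext c
      by_cases hc : c = a
      · simp [hc]
      · simp [hc, hunit u]
    rw [h1, hassoc (fun c b => if c = a then f b else u)]
    congr 1
    funext c
    by_cases hc : c = a
    · simp [hc]
    · simp [hc]
  -- π_a is idempotent
  have idem : ∀ (a : C) (x : X), π a (π a x) = π a x := by
    intro a x
    rw [hπ a x, key a]
    simp [← hπ a x]
  -- π_a applied to elements of range (π_a)
  have fix : ∀ (a : C) (y : Set.range (π a)), π a (y : X) = (y : X) := by
    intro a y
    obtain ⟨z, hz⟩ := y.2
    rw [← hz, idem]
  -- σ ∘ π' = id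
  have left : Function.LeftInverse σ π' := by
    intro x
    rw [hσ]
    have h1 : (fun a => ((π' x a : X))) = fun a => θ (fun b => if b = a then x else u) := by
      funext a; rw [hπ' x a, hπ]
    rw [h1, hassoc (fun a b => if b = a then x else u)]
    simpa using hunit x
  -- π' ∘ σ = id
  have right : Function.RightInverse σ π' := by
    intro β
    funext a
    apply Subtype.ext
    rw [hπ', hσ, key a, fix]
  refine ⟨left, right, ?_⟩
  intro β
  funext a
  apply Subtype.ext
  rw [hπ', hπ', key a]
end

section
/- Let C be a set, X a set, and φ: X → C a surjective map. Consider the maps η, ν: (C → R(X)) × C → R(X) × C given by η(ψ, a) = (ψ(a), a) and ν(ψ, a) = (θ(ψ), a), where R(X) is the set of sections of φ with product contramodule structure θ(ψ)(c) = ψ(c)(c). Then the equivalence relation generated by the coequalizer relation (i.e., the relation identifying η(ψ,a) with ν(ψ,a) for all ψ, a) coincides with the relation: (β, a) ~ (γ, b) iff a = b and β(a) = γ(a). -/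
/-- For a surjective `φ : X → C` and `R(X)` the set of sections of `φ` with its product
contramodule structure `θ ψ = fun c => ψ c c`, the equivalence relation generated by
identifying `η(ψ, a) = (ψ a, a)` with `ν(ψ, a) = (θ ψ, a)` coincides with the relation
`(β, a) ∼ (γ, b) ↔ a = b ∧ β a = γ b`. -/
theorem stmt_10 (C X : Type*) (φ : X → C) (hφ : Function.Surjective φ) :
    ∀ p q : {s : C → X // ∀ c, φ (s c) = c} × C,
      Relation.EqvGen
        (fun p q : {s : C → X // ∀ c, φ (s c) = c} × C =>
          ∃ (ψ : C → {s : C → X // ∀ c, φ (s c) = c}) (a : C),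
            p = (ψ a, a) ∧
            q = (⟨fun c => (ψ c).1 c, fun c => (ψ c).2 c⟩, a)) p q ↔
      (p.2 = q.2 ∧ p.1.1 p.2 = q.1.1 q.2) := by
  classical
  set R := {s : C → X // ∀ c, φ (s c) = c} with hR
  intro p q
  constructor
  · intro h
    induction h with
    | rel x y hxy =>
      obtain ⟨ψ, a, hx, hy⟩ := hxy
      subst hx; subst hy
      exact ⟨rfl, rfl⟩
    | refl x => exact ⟨rfl, rfl⟩
    | symm x y _ ih => exact ⟨ih.1.symm, ih.2.symm⟩
    | trans x y z _ _ ih1 ih2 => exact ⟨ih1.1.trans ih2.1, ih1.2.trans ih2.2⟩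
  · rintro ⟨h1, h2⟩
    obtain ⟨β, a⟩ := p
    obtain ⟨γ, b⟩ := q
    simp only at h1 h2
    subst h1
    -- a fixed section
    have s0 : R := ⟨fun c => (hφ c).choose, fun c => (hφ c).choose_spec⟩
    let Ψ : R → C → R := fun δ c => if c = a then δ else s0
    have key : ∀ δ : R, Relation.EqvGen
        (fun p q : R × C =>
          ∃ (ψ : C → R) (a : C),
            p = (ψ a, a) ∧
            q = (⟨fun c => (ψ c).1 c, fun c => (ψ c).2 c⟩, a)) (δ, a)
        (⟨fun c => (Ψ δ c).1 c, fun c => (Ψ δ c).2 c⟩, a) := by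
      intro δ
      apply Relation.EqvGen.rel
      exact ⟨Ψ δ, a, by simp [Ψ], rfl⟩
    have heq : (⟨fun c => (Ψ β c).1 c, fun c => (Ψ β c).2 c⟩ : R)
        = ⟨fun c => (Ψ γ c).1 c, fun c => (Ψ γ c).2 c⟩ := by
      apply Subtype.ext
      funext c
      by_cases hc : c = a
      · subst hc; simp [Ψ, h2]
      · simp [Ψ, hc]
    refine Relation.EqvGen.trans _ _ _ (key β) ?_
    rw [heq]
    exact Relation.EqvGen.symm _ _ (key γ)
end

section
/- Let C be a set, viewed as the diagonal comonoid in Sets. The functor R sending a C-comodule (X, φ: X → C) to its set of sections, and the functor L sending a contramodule (Y, θ) to the coequalizer of the two maps η(β,a) = (β(a),a) and ν(β,a) = (θ(β),a) from (C → Y) × C to Y × C, restrict to mutually quasi-inverse equivalences between the category of C-comodules with surjective structure map and the category of nonempty C-contramodules. -/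
open CategoryTheory

universe u

/-- A `C`-comodule in `Sets` with surjective (nondegenerate) structure map:
a set over `C` with surjective projection. -/
structure NondegComod (C : Type u) : Type (u + 1) where
  X : Type u
  φ : X → C
  surj : Function.Surjective φ

instance (C : Type u) : Category (NondegComod C) where
  Hom A B := {f : A.X → B.X // ∀ x, B.φ (f x) = A.φ x}
  id A := ⟨id, fun _ => rfl⟩
  comp f g := ⟨g.1 ∘ f.1, fun x => (g.2 (f.1 x)).trans (f.2 x)⟩

/-- A nonempty contramodule over the set `C`: a nonempty set `Y` with a structure map
`θ : (C → Y) → Y` satisfying contraunitality and the row-diagonal identity. -/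
structure NeContramod (C : Type u) : Type (u + 1) where
  Y : Type u
  θ : (C → Y) → Y
  hunit : ∀ y : Y, θ (fun _ => y) = y
  hassoc : ∀ γ : C → C → Y, θ (fun a => θ (fun b => γ a b)) = θ (fun a => γ a a)
  ne : Nonempty Y

instance (C : Type u) : Category (NeContramod C) where
  Hom A B := {f : A.Y → B.Y // ∀ β : C → A.Y, f (A.θ β) = B.θ (f ∘ β)}
  id A := ⟨id, fun _ => rfl⟩
  comp f g := ⟨g.1 ∘ f.1, fun β => by
    simp only [Function.comp_apply, f.2 β, g.2 (f.1 ∘ β)]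
    rfl⟩

open scoped Classical
noncomputable section Aux11

variable {C : Type u}

/-- The relation whose quotient is the coequalizer. -/
def LRel (B : NeContramod C) : B.Y × C → B.Y × C → Prop :=
  fun p q => ∃ (β : C → B.Y) (a : C), p = (β a, a) ∧ q = (B.θ β, a)

/-- Sections functor. -/
def Rfun (C : Type u) : NondegComod C ⥤ NeContramod C where
  obj A :=
    { Y := {s : C → A.X // ∀ c, A.φ (s c) = c}
      θ := fun β => ⟨fun c => (β c).1 c, fun c => (β c).2 c⟩
      hunit := fun _ => rfl
      hassoc := fun _ => rfl
      ne := ⟨⟨fun c => (A.surj c).choose, fun c => (A.surj c).choose_spec⟩⟩ }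
  map f := ⟨fun s => ⟨fun c => f.1 (s.1 c), fun c => (f.2 (s.1 c)).trans (s.2 c)⟩,
    fun _ => rfl⟩
  map_id _ := rfl
  map_comp _ _ := rfl

/-- Coequalizer functor. -/
def Lfun (C : Type u) : NeContramod C ⥤ NondegComod C where
  obj B :=
    { X := Quot (LRel B)
      φ := Quot.lift (fun p => p.2) (by rintro p q ⟨β, a, rfl, rfl⟩; rfl)
      surj := fun c => ⟨Quot.mk _ (Classical.choice B.ne, c), rfl⟩ }
  map {B B'} f :=
    ⟨show Quot (LRel B) → Quot (LRel B') from
      Quot.map (fun p => (f.1 p.1, p.2))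
        (by rintro p q ⟨β, a, rfl, rfl⟩
            exact ⟨f.1 ∘ β, a, rfl, by dsimp only; rw [f.2]⟩),
     fun x => by induction x using Quot.ind with | _ p => rfl⟩
  map_id B := by
    apply Subtype.ext; funext x
    induction x using Quot.ind with | _ p => rfl
  map_comp f g := by
    apply Subtype.ext; funext x
    induction x using Quot.ind with | _ p => rfl

/-- The invariant `J z [(y,c)] = θ (fun b => if b = c then y else z)`. -/
def Jmap (B : NeContramod C) (z : B.Y) : Quot (LRel B) → B.Y :=
  Quot.lift (fun p => B.θ (fun b => if b = p.2 then p.1 else z)) <| by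
    rintro p q ⟨β, a, rfl, rfl⟩
    dsimp only
    have h := B.hassoc (fun b c => if b = a then β c else z)
    have h1 : (fun b => B.θ (fun c => if b = a then β c else z))
        = fun b => if b = a then B.θ β else z := by
      funext b
      by_cases hb : b = a
      · simp [hb]
      · simp [hb, B.hunit]
    have h2 : (fun b => (fun c => if b = a then β c else z) b)
        = fun b => if b = a then β a else z := by
      funext b
      by_cases hb : b = a
      · simp [hb]
      · simp [hb]
    rw [h1, h2] at h
    exact h.symm

/-- counit-style map `L (R A) ⟶ A`. -/
def sigmaHom (A : NondegComod C) : (Lfun C).obj ((Rfun C).obj A) ⟶ A :=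
  ⟨show Quot (LRel ((Rfun C).obj A)) → A.X from
     Quot.lift (fun p => (p.1).1 p.2) (by rintro p q ⟨β, a, rfl, rfl⟩; rfl),
   fun x => by induction x using Quot.ind with | _ p => exact (p.1).2 p.2⟩

theorem sigma_bij (A : NondegComod C) : Function.Bijective (sigmaHom A).1 := by
  constructor
  · intro q q'
    induction q using Quot.ind with | _ p =>
    induction q' using Quot.ind with | _ p' =>
    obtain ⟨s, c⟩ := p
    obtain ⟨s', c'⟩ := p'
    intro h
    replace h : s.1 c = s'.1 c' := h
    have hc : c = c' := by rw [← s.2 c, ← s'.2 c', h]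
    subst hc
    show Quot.mk (LRel ((Rfun C).obj A)) (s, c) = Quot.mk _ (s', c)
    set β : C → ((Rfun C).obj A).Y := fun a => if a = c then s' else s with hβ
    have hθ : (((Rfun C).obj A).θ β) = s := by
      apply Subtype.ext
      funext a
      show (β a).1 a = s.1 a
      by_cases ha : a = c
      · subst ha; simp [hβ, h.symm]
      · simp [hβ, ha]
    have h3 : Quot.mk (LRel ((Rfun C).obj A)) (β c, c)
        = Quot.mk _ (((Rfun C).obj A).θ β, c) := Quot.sound ⟨β, c, rfl, rfl⟩
    rw [hθ] at h3
    have hβc : β c = s' := by simp [hβ]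
    rw [hβc] at h3
    exact h3.symm
  · intro x
    refine ⟨Quot.mk _ (⟨fun c => if c = A.φ x then x else (A.surj c).choose, ?_⟩, A.φ x), ?_⟩
    · intro c
      by_cases h : c = A.φ x
      · simp [h]
      · simp [h, (A.surj c).choose_spec]
    · show (if A.φ x = A.φ x then x else _) = x
      simp

def sigmaIso (A : NondegComod C) : (Lfun C).obj ((Rfun C).obj A) ≅ A where
  hom := sigmaHom A
  inv := ⟨(Equiv.ofBijective _ (sigma_bij A)).symm, fun x => by
    conv_rhs => rw [← (Equiv.ofBijective _ (sigma_bij A)).apply_symm_apply x]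
    exact ((sigmaHom A).2 _).symm⟩
  hom_inv_id := Subtype.ext (funext fun q =>
    (Equiv.ofBijective _ (sigma_bij A)).symm_apply_apply q)
  inv_hom_id := Subtype.ext (funext fun x =>
    (Equiv.ofBijective _ (sigma_bij A)).apply_symm_apply x)

/-- unit-style map `B ⟶ R (L B)`. -/
def uHom (B : NeContramod C) : B ⟶ (Rfun C).obj ((Lfun C).obj B) :=
  ⟨fun y => ⟨fun c => Quot.mk _ (y, c), fun c => rfl⟩,
   fun β => by
    apply Subtype.ext
    funext c
    exact (Quot.sound ⟨β, c, rfl, rfl⟩).symm⟩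

theorem u_bij (B : NeContramod C) : Function.Bijective (uHom B).1 := by
  obtain ⟨z⟩ := B.ne
  constructor
  · intro y y' h
    have hJ : ∀ c, Jmap B z (Quot.mk _ (y, c)) = Jmap B z (Quot.mk _ (y', c)) := by
      intro c
      exact congrArg (fun s : ((Rfun C).obj ((Lfun C).obj B)).Y => Jmap B z (s.1 c)) h
    have key : ∀ w : B.Y, B.θ (fun c => B.θ (fun b => if b = c then w else z)) = w := by
      intro w
      have h := B.hassoc (fun c b => if b = c then w else z)
      simpa [B.hunit] using h
    calc y = B.θ (fun c => B.θ (fun b => if b = c then y else z)) := (key y).symm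
      _ = B.θ (fun c => B.θ (fun b => if b = c then y' else z)) := by
          exact congrArg B.θ (funext fun c => hJ c)
      _ = y' := key y'
  · rintro ⟨s, hs⟩
    have hrep : ∀ c, ∃ y : B.Y, Quot.mk (LRel B) (y, c) = s c := by
      intro c
      obtain ⟨p, hp⟩ := Quot.exists_rep (s c)
      have hp2 : p.2 = c := by
        have h2 := hs c
        rw [← hp] at h2
        exact h2
      exact ⟨p.1, by rw [show ((p.1, c) : B.Y × C) = p by rw [← hp2]]; exact hp⟩
    choose β hβ using hrep
    refine ⟨B.θ β, ?_⟩
    apply Subtype.ext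
    funext c
    show Quot.mk _ (B.θ β, c) = s c
    rw [← hβ c]
    exact (Quot.sound ⟨β, c, rfl, rfl⟩).symm

def uIso (B : NeContramod C) : B ≅ (Rfun C).obj ((Lfun C).obj B) where
  hom := uHom B
  inv := ⟨(Equiv.ofBijective _ (u_bij B)).symm, fun β => by
    apply (u_bij B).1
    have h1 : ∀ x, (uHom B).1 ((Equiv.ofBijective _ (u_bij B)).symm x) = x :=
      fun x => (Equiv.ofBijective _ (u_bij B)).apply_symm_apply x
    rw [h1, (uHom B).2]
    exact (congrArg _ (funext fun c => h1 (β c))).symm⟩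
  hom_inv_id := Subtype.ext (funext fun y =>
    (Equiv.ofBijective _ (u_bij B)).symm_apply_apply y)
  inv_hom_id := Subtype.ext (funext fun s =>
    (Equiv.ofBijective _ (u_bij B)).apply_symm_apply s)

def theEquiv (C : Type u) : NondegComod C ≌ NeContramod C :=
  CategoryTheory.Equivalence.mk (Rfun C) (Lfun C)
    ((NatIso.ofComponents (fun A => sigmaIso A) (by
      intro A A' f
      apply Subtype.ext
      funext q
      induction q using Quot.ind with | _ p => rfl)).symm)
    ((NatIso.ofComponents (fun B => uIso B) (by
      intro B B' f
      apply Subtype.ext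
      funext y
      rfl)).symm)

end Aux11

/-- The functor `R` (sections of the structure map) and the functor `L` (the coequalizer
of `η(β,a) = (β a, a)` and `ν(β,a) = (θ β, a)`) are mutually quasi-inverse equivalences
between nondegenerate `C`-comodules and nonempty `C`-contramodules: there is an
equivalence of categories whose two functors act on objects by sections and by the
coequalizer, respectively. -/
theorem stmt_11 (C : Type u) :
    ∃ e : NondegComod C ≌ NeContramod C,
      (∀ A : NondegComod C,
        (e.functor.obj A).Y = {s : C → A.X // ∀ c, A.φ (s c) = c}) ∧
      (∀ B : NeContramod C,
        (e.inverse.obj B).X =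
          Quot (fun p q : B.Y × C =>
            ∃ (β : C → B.Y) (a : C), p = (β a, a) ∧ q = (B.θ β, a))) := by
  exact ⟨theEquiv C, fun A => rfl, fun B => rfl⟩
end

section
/- A topological space X is a presentable object in the category of topological spaces (i.e., Hom(X, −) preserves λ-directed colimits for some regular cardinal λ) if and only if X is discrete. -/
open CategoryTheory CategoryTheory.Limits Opposite Cardinal

universe u

namespace Stmt19

variable (I : Type u) [LinearOrder I]

/-- Carrier of stage `i`: a doubled limit point `∗` (inl), a limit point `⊤`
(inr inl), and isolated points `(i, λ)` (inr inr). -/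
abbrev C (i : I) : Type u := PUnit.{u+1} ⊕ PUnit.{u+1} ⊕ {j : I // i < j}

variable [Nonempty I]

/-- Topology: isolated points are open; neighborhoods of `⊤` are tails of
isolated points together with `⊤`; neighborhoods of `∗` additionally contain `⊤`. -/
def topo (i : I) : TopologicalSpace (C I i) where
  IsOpen U := (Sum.inl PUnit.unit ∈ U → Sum.inr (Sum.inl PUnit.unit) ∈ U) ∧
    (Sum.inr (Sum.inl PUnit.unit) ∈ U →
      ∃ β : I, ∀ (j : I) (h : i < j), β < j → Sum.inr (Sum.inr ⟨j, h⟩) ∈ U)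
  isOpen_univ := ⟨fun _ => trivial, fun _ => ⟨Classical.arbitrary I, fun _ _ _ => trivial⟩⟩
  isOpen_inter := by
    rintro U V ⟨hU1, hU2⟩ ⟨hV1, hV2⟩
    refine ⟨fun h => ⟨hU1 h.1, hV1 h.2⟩, fun h => ?_⟩
    obtain ⟨β₁, h₁⟩ := hU2 h.1
    obtain ⟨β₂, h₂⟩ := hV2 h.2
    exact ⟨max β₁ β₂, fun j hij hβ =>
      ⟨h₁ j hij ((le_max_left _ _).trans_lt hβ), h₂ j hij ((le_max_right _ _).trans_lt hβ)⟩⟩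
  isOpen_sUnion := by
    intro S hS
    constructor
    · rintro ⟨t, htS, ht⟩
      exact ⟨t, htS, (hS t htS).1 ht⟩
    · rintro ⟨t, htS, ht⟩
      obtain ⟨β, hβ⟩ := (hS t htS).2 ht
      exact ⟨β, fun j hij hβj => ⟨t, htS, hβ j hij hβj⟩⟩

/-- Stage `i` as an object of `TopCat`. -/
def sp (i : I) : TopCat.{u} := @TopCat.of (C I i) (topo I i)

/-- Connecting map: collapse isolated points `≤ i'` into `∗`. -/
def φ {I : Type u} [LinearOrder I] {i i' : I} (_h : i ≤ i') : C I i → C I i'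
  | Sum.inl _ => Sum.inl PUnit.unit
  | Sum.inr (Sum.inl _) => Sum.inr (Sum.inl PUnit.unit)
  | Sum.inr (Sum.inr j) =>
      if hj : i' < j.1 then Sum.inr (Sum.inr ⟨j.1, hj⟩) else Sum.inl PUnit.unit

theorem φ_cont {i i' : I} (h : i ≤ i') :
    @Continuous (C I i) (C I i') (topo I i) (topo I i') (φ h) := by
  rw [@continuous_def _ _ (topo I i) (topo I i')]
  intro U hU
  obtain ⟨h1, h2⟩ := hU
  constructor
  · intro hs
    exact h1 hs
  · intro ht
    obtain ⟨β, hβ⟩ := h2 ht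
    refine ⟨max β i', fun j hij hβj => ?_⟩
    have hi'j : i' < j := (le_max_right β i').trans_lt hβj
    show φ h (Sum.inr (Sum.inr ⟨j, hij⟩)) ∈ U
    simp only [φ]
    rw [dif_pos hi'j]
    exact hβ j hi'j ((le_max_left β i').trans_lt hβj)

/-- The diagram. -/
def Fd : I ⥤ TopCat.{u} where
  obj := sp I
  map {i i'} f :=
    @TopCat.ofHom (C I i) (C I i') (topo I i) (topo I i') (@ContinuousMap.mk (C I i) (C I i') (topo I i) (topo I i') (φ (leOfHom f))
      (φ_cont I (leOfHom f)))
  map_id i := by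
    refine TopCat.ext ?_
    rintro (⟨⟩ | ⟨⟩ | ⟨j, hj⟩)
    · rfl
    · rfl
    · show φ le_rfl (Sum.inr (Sum.inr ⟨j, hj⟩)) = Sum.inr (Sum.inr ⟨j, hj⟩)
      simp only [φ]
      rw [dif_pos hj]
  map_comp {i i' i''} f g := by
    refine TopCat.ext ?_
    rintro (⟨⟩ | ⟨⟩ | ⟨j, hj⟩)
    · rfl
    · rfl
    · show φ (leOfHom (f ≫ g)) (Sum.inr (Sum.inr ⟨j, hj⟩)) =
        φ (leOfHom g) (φ (leOfHom f) (Sum.inr (Sum.inr ⟨j, hj⟩)))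
      by_cases h1 : i' < j
      · rw [show φ (leOfHom f) (Sum.inr (Sum.inr ⟨j, hj⟩)) =
            (Sum.inr (Sum.inr ⟨j, h1⟩) : C I i') from by
          simp only [φ]; rw [dif_pos h1]]
        by_cases h2 : i'' < j
        · simp only [φ]
        · simp only [φ]
      · have h2 : ¬ i'' < j := fun h => h1 ((leOfHom g).trans_lt h)
        rw [show φ (leOfHom f) (Sum.inr (Sum.inr ⟨j, hj⟩)) =
            (Sum.inl PUnit.unit : C I i') from by
          simp only [φ]; rw [dif_neg h1]]
        simp only [φ]
        rw [dif_neg h2]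

/-- Two-point indiscrete space. -/
def PT : TopCat.{u} := @TopCat.of (ULift.{u} Bool) ⊤

def collapse (i : I) : C I i → ULift.{u} Bool
  | Sum.inr (Sum.inl _) => ULift.up true
  | _ => ULift.up false

/-- The colimit cocone over `Fd I` with point the two-point indiscrete space. -/
def K : Cocone (Fd I) where
  pt := PT
  ι :=
    { app := fun i =>
        @TopCat.ofHom (C I i) (ULift.{u} Bool) (topo I i) ⊤ (@ContinuousMap.mk (C I i) (ULift.{u} Bool) (topo I i) ⊤ (collapse I i)
          continuous_top)
      naturality := fun {i i'} f => by
        refine TopCat.ext ?_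
        rintro (⟨⟩ | ⟨⟩ | ⟨j, hj⟩)
        · rfl
        · rfl
        · show collapse I i' (φ (leOfHom f) (Sum.inr (Sum.inr ⟨j, hj⟩))) =
            collapse I i (Sum.inr (Sum.inr ⟨j, hj⟩))
          simp only [φ]
          by_cases h1 : i' < j
          · rw [dif_pos h1]; rfl
          · rw [dif_neg h1]; rfl }

variable {I}

theorem app_star_le (s : Cocone (Fd I)) {i i' : I} (h : i ≤ i') :
    s.ι.app i (Sum.inl PUnit.unit) = s.ι.app i' (Sum.inl PUnit.unit) := by
  have h2 := ConcreteCategory.congr_hom (s.w (homOfLE h)) (Sum.inl PUnit.unit : C I i)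
  exact h2.symm

theorem app_star (s : Cocone (Fd I)) (i i' : I) :
    s.ι.app i (Sum.inl PUnit.unit) = s.ι.app i' (Sum.inl PUnit.unit) :=
  (app_star_le s (le_max_left i i')).trans (app_star_le s (le_max_right i i')).symm

theorem app_top_le (s : Cocone (Fd I)) {i i' : I} (h : i ≤ i') :
    s.ι.app i (Sum.inr (Sum.inl PUnit.unit)) = s.ι.app i' (Sum.inr (Sum.inl PUnit.unit)) := by
  have h2 := ConcreteCategory.congr_hom (s.w (homOfLE h)) (Sum.inr (Sum.inl PUnit.unit) : C I i)
  exact h2.symm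

theorem app_top (s : Cocone (Fd I)) (i i' : I) :
    s.ι.app i (Sum.inr (Sum.inl PUnit.unit)) = s.ι.app i' (Sum.inr (Sum.inl PUnit.unit)) :=
  (app_top_le s (le_max_left i i')).trans (app_top_le s (le_max_right i i')).symm

theorem app_iso (s : Cocone (Fd I)) {i j : I} (hij : i < j) :
    s.ι.app i (Sum.inr (Sum.inr ⟨j, hij⟩)) = s.ι.app j (Sum.inl PUnit.unit) := by
  have h2 := ConcreteCategory.congr_hom (s.w (homOfLE hij.le)) (Sum.inr (Sum.inr ⟨j, hij⟩) : C I i)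
  have hφ : φ hij.le (Sum.inr (Sum.inr ⟨j, hij⟩) : C I i) = (Sum.inl PUnit.unit : C I j) := by
    simp only [φ]
    rw [dif_neg (lt_irrefl j)]
  have h3 : s.ι.app i (Sum.inr (Sum.inr ⟨j, hij⟩)) =
      s.ι.app j (φ hij.le (Sum.inr (Sum.inr ⟨j, hij⟩))) := h2.symm
  rw [hφ] at h3
  exact h3

theorem star_iff_top [NoMaxOrder I] (s : Cocone (Fd I)) (i : I) {V : Set s.pt}
    (hV : IsOpen V) :
    (s.ι.app i (Sum.inl PUnit.unit) ∈ V ↔ s.ι.app i (Sum.inr (Sum.inl PUnit.unit)) ∈ V) := by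
  have hU : (topo I i).IsOpen (⇑(s.ι.app i) ⁻¹' V) :=
    (map_continuous (s.ι.app i).hom).isOpen_preimage V hV
  obtain ⟨h1, h2⟩ := hU
  constructor
  · exact fun h => h1 h
  · intro h
    obtain ⟨β, hβ⟩ := h2 h
    obtain ⟨j₀, hj₀⟩ := exists_gt (max β i)
    have hij : i < j₀ := (le_max_right β i).trans_lt hj₀
    have hmem := hβ j₀ hij ((le_max_left β i).trans_lt hj₀)
    have : s.ι.app i (Sum.inr (Sum.inr ⟨j₀, hij⟩)) = s.ι.app i (Sum.inl PUnit.unit) :=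
      (app_iso s hij).trans (app_star s j₀ i)
    have hmem' : s.ι.app i (Sum.inr (Sum.inr ⟨j₀, hij⟩)) ∈ V := hmem
    rwa [this] at hmem'

variable (I)

/-- The cocone `K` is a colimit cocone. -/
noncomputable def KColim [NoMaxOrder I] : IsColimit (K I) where
  desc s :=
    @TopCat.ofHom (ULift.{u} Bool) s.pt ⊤ _ <| @ContinuousMap.mk (ULift.{u} Bool) s.pt ⊤ _
      (fun b => if b.down then s.ι.app (Classical.arbitrary I) (Sum.inr (Sum.inl PUnit.unit))
        else s.ι.app (Classical.arbitrary I) (Sum.inl PUnit.unit))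
      (by
        rw [@continuous_def _ _ ⊤ _]
        intro V hV
        rw [TopologicalSpace.isOpen_top_iff]
        by_cases hm : s.ι.app (Classical.arbitrary I) (Sum.inl PUnit.unit) ∈ V
        · right
          ext b
          simp only [Set.mem_preimage, Set.mem_univ, iff_true]
          by_cases hb : b.down
          · rw [if_pos hb]
            exact (star_iff_top s _ hV).1 hm
          · rw [if_neg hb]
            exact hm
        · left
          ext b
          simp only [Set.mem_preimage, Set.mem_empty_iff_false, iff_false]
          by_cases hb : b.down
          · rw [if_pos hb]
            exact fun hc => hm ((star_iff_top s _ hV).2 hc)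
          · rw [if_neg hb]
            exact hm)
  fac s i := by
    refine TopCat.ext ?_
    rintro (⟨⟩ | ⟨⟩ | ⟨j, hj⟩)
    · exact app_star s (Classical.arbitrary I) i
    · exact app_top s (Classical.arbitrary I) i
    · exact (app_star s (Classical.arbitrary I) j).trans (app_iso s hj).symm
  uniq s m hm := by
    refine TopCat.ext ?_
    rintro ⟨b⟩
    cases b
    · have h5 := hm (Classical.arbitrary I)
      have h6 : m ((K I).ι.app (Classical.arbitrary I) (Sum.inl PUnit.unit)) =
          s.ι.app (Classical.arbitrary I) (Sum.inl PUnit.unit) := by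
        rw [← h5]
        rfl
      exact h6
    · have h5 := hm (Classical.arbitrary I)
      have h6 : m ((K I).ι.app (Classical.arbitrary I) (Sum.inr (Sum.inl PUnit.unit))) =
          s.ι.app (Classical.arbitrary I) (Sum.inr (Sum.inl PUnit.unit)) := by
        rw [← h5]
        rfl
      exact h6

end Stmt19

open Stmt19

/-- A topological space `X` is a presentable object of the category of topological spaces
(i.e. `Hom(X, −)` preserves `κ`-directed colimits for some regular cardinal `κ`) if and
only if `X` is discrete. -/
theorem stmt_19 (X : TopCat.{u}) :
    (∃ κ : Cardinal.{u}, κ.IsRegular ∧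
      ∀ (J : Type u) [Preorder J],
        (∀ S : Set J, Cardinal.mk S < κ → ∃ j : J, ∀ i ∈ S, i ≤ j) →
        Nonempty (Limits.PreservesColimitsOfShape J (coyoneda.obj (Opposite.op X)))) ↔
    DiscreteTopology X := by
  classical
  constructor
  · rintro ⟨κ, hκ, H⟩
    obtain ⟨μ, hμ, hκμ, hXμ⟩ :
        ∃ μ : Cardinal.{u}, μ.IsRegular ∧ κ ≤ μ ∧ #↑X < μ := by
      refine ⟨max κ (Order.succ (max (#↑X) ℵ₀)), ?_, le_max_left _ _, ?_⟩
      · rcases max_cases κ (Order.succ (max (#↑X) ℵ₀)) with ⟨h, -⟩ | ⟨h, -⟩ <;> rw [h]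
        · exact hκ
        · exact isRegular_succ (le_max_right _ _)
      · exact ((le_max_left _ _).trans_lt (Order.lt_succ _)).trans_le (le_max_right _ _)
    set I := μ.ord.ToType with hIdef
    haveI : Nonempty I :=
      Ordinal.nonempty_toType_iff.mpr (by
        rw [ne_eq, Cardinal.ord_eq_zero]
        exact hμ.pos.ne')
    haveI : NoMaxOrder I := Cardinal.noMaxOrder hμ.aleph0_le
    have bnd : ∀ S : Set I, #↑S < μ → ∃ j : I, ∀ i ∈ S, i ≤ j := by
      intro S hS
      set e := Ordinal.ToType.mk (o := μ.ord) with he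
      have hsup : (⨆ x : S, (e.symm x.1).1) < μ.ord :=
        Cardinal.iSup_lt_ord_of_isRegular hμ hS fun x => (e.symm x.1).2
      refine ⟨e ⟨_, hsup⟩, fun i hi => ?_⟩
      have h1 : (e.symm i) ≤ (⟨_, hsup⟩ : Set.Iio μ.ord) :=
        Ordinal.le_iSup (fun x : S => (e.symm x.1).1) ⟨i, hi⟩
      calc i = e (e.symm i) := (e.apply_symm_apply i).symm
        _ ≤ e ⟨_, hsup⟩ := e.monotone h1
    obtain ⟨hP⟩ := H I (fun S hS => bnd S (hS.trans_le hκμ))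
    haveI := hP
    have hmc : IsColimit ((coyoneda.obj (op X)).mapCocone (K I)) :=
      isColimitOfPreserves _ (KColim I)
    rw [discreteTopology_iff_forall_isOpen]
    intro A
    set χA : X ⟶ PT.{u} :=
      @TopCat.ofHom _ _ _ ⊤ (@ContinuousMap.mk _ _ _ ⊤
        (fun x => if x ∈ A then ULift.up true else ULift.up false) continuous_top) with hχ
    obtain ⟨i, g0, hg⟩ := Types.jointly_surjective _ hmc χA
    let g : X ⟶ (Fd I).obj i := g0
    have hg' : g ≫ (K I).ι.app i = χA := hg
    have hpt : ∀ x : ↑X,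
        collapse I i (g x) = (if x ∈ A then ULift.up true else ULift.up false) :=
      fun x => ConcreteCategory.congr_hom hg' x
    have gm_top : ∀ x ∈ A, g x = Sum.inr (Sum.inl PUnit.unit) := by
      intro x hx
      have h0 := hpt x
      rw [if_pos hx] at h0
      rcases hgx : g x with ⟨⟨⟩⟩ | ⟨⟨⟩⟩ | ⟨j, hj⟩
      · rw [hgx] at h0
        simp [collapse] at h0
      · rfl
      · rw [hgx] at h0
        simp [collapse] at h0
    let v : ↑X → I := fun x =>
      match g x with
      | Sum.inr (Sum.inr j) => j.1
      | _ => Classical.arbitrary I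
    obtain ⟨β, hβ⟩ := bnd (Set.range v) (mk_range_le.trans_lt hXμ)
    set V : Set (C I i) := {c | match c with
      | Sum.inl _ => False
      | Sum.inr (Sum.inl _) => True
      | Sum.inr (Sum.inr j) => β < j.1} with hVdef
    have hV : (topo I i).IsOpen V :=
      ⟨fun h => h.elim, fun _ => ⟨β, fun j hij hβj => hβj⟩⟩
    have hAV : A = ⇑g ⁻¹' V := by
      ext x
      constructor
      · intro hx
        show g x ∈ V
        rw [gm_top x hx]
        trivial
      · intro hx
        have hx' : g x ∈ V := hx
        by_contra hxA
        have h0 := hpt x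
        rw [if_neg hxA] at h0
        rcases hgx : g x with ⟨⟨⟩⟩ | ⟨⟨⟩⟩ | ⟨j, hj⟩
        · rw [hgx] at hx'
          exact hx'
        · rw [hgx] at h0
          simp [collapse] at h0
        · rw [hgx] at hx'
          have hxb : β < j := hx'
          have hvx : v x = j := by
            show (match g x with
              | Sum.inr (Sum.inr j) => j.1
              | _ => Classical.arbitrary I) = j
            rw [hgx]
          have hle : v x ≤ β := hβ (v x) ⟨x, rfl⟩
          rw [hvx] at hle
          exact absurd hxb (not_lt.mpr hle)
    rw [hAV]
    exact (map_continuous g.hom).isOpen_preimage V hV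
  · intro hd
    refine ⟨Order.succ (max (#↑X) ℵ₀), isRegular_succ (le_max_right _ _), ?_⟩
    intro J _ hdir
    have hκr : (Order.succ (max (#↑X) ℵ₀)).IsRegular := isRegular_succ (le_max_right _ _)
    have hXκ : #↑X < Order.succ (max (#↑X) ℵ₀) :=
      (le_max_left _ _).trans_lt (Order.lt_succ _)
    haveI : Nonempty J := by
      obtain ⟨j, -⟩ := hdir ∅ (by
        rw [Cardinal.mk_emptyCollection]
        exact hκr.pos)
      exact ⟨j⟩
    haveI : IsDirected J (· ≤ ·) := by
      constructor
      intro a b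
      obtain ⟨j, hj⟩ := hdir {a, b}
        ((Set.toFinite _).lt_aleph0.trans_le hκr.aleph0_le)
      exact ⟨j, hj a (by simp), hj b (by simp)⟩
    refine ⟨⟨fun {G} => ⟨fun {c} hc => ⟨?_⟩⟩⟩⟩
    have hft : IsColimit ((forget TopCat).mapCocone c) :=
      isColimitOfPreserves (forget TopCat) hc
    apply Types.FilteredColimit.isColimitOf
    · intro x0
      let x : X ⟶ c.pt := x0
      have hj : ∀ a : ↑X, ∃ (j : J) (y : ↑(G.obj j)), (c.ι.app j) y = x a := by
        intro a
        obtain ⟨j, y, hy⟩ := Types.jointly_surjective _ hft (x a)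
        exact ⟨j, y, hy⟩
      choose jf yf hyf using hj
      obtain ⟨js, hjs⟩ := hdir (Set.range jf) (mk_range_le.trans_lt hXκ)
      haveI := hd
      refine ⟨js, TopCat.ofHom (ContinuousMap.mk
        (fun a => (G.map (homOfLE (hjs _ ⟨a, rfl⟩))) (yf a))
        continuous_of_discreteTopology), ?_⟩
      show x = TopCat.ofHom (ContinuousMap.mk
        (fun a => (G.map (homOfLE (hjs _ ⟨a, rfl⟩))) (yf a))
        continuous_of_discreteTopology) ≫ c.ι.app js
      refine TopCat.ext fun a => ?_
      have hnat := ConcreteCategory.congr_hom (c.w (homOfLE (hjs _ ⟨a, rfl⟩))) (yf a)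
      show x a = (c.ι.app js) ((G.map (homOfLE (hjs _ ⟨a, rfl⟩))) (yf a))
      rw [show (c.ι.app js) ((G.map (homOfLE (hjs _ ⟨a, rfl⟩))) (yf a)) =
        (c.ι.app (jf a)) (yf a) from hnat]
      exact (hyf a).symm
    · intro i j xi0 xj0 hxx
      let xi : X ⟶ G.obj i := xi0
      let xj : X ⟶ G.obj j := xj0
      have h' : xi ≫ c.ι.app i = xj ≫ c.ι.app j := hxx
      have key : ∀ a : ↑X, ∃ (k : J) (f : i ⟶ k) (g : j ⟶ k),
          (G ⋙ forget TopCat).map f (xi a) = (G ⋙ forget TopCat).map g (xj a) := by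
        intro a
        have : ((forget TopCat).mapCocone c).ι.app i (xi a) =
            ((forget TopCat).mapCocone c).ι.app j (xj a) :=
          ConcreteCategory.congr_hom h' a
        exact (Types.FilteredColimit.isColimit_eq_iff _ hft).mp this
      choose kf ff gf hk using key
      obtain ⟨ks, hks⟩ := hdir (Set.range kf ∪ {i, j})
        ((Cardinal.mk_union_le _ _).trans_lt
          (Cardinal.add_lt_of_lt hκr.aleph0_le (mk_range_le.trans_lt hXκ)
            ((Set.toFinite _).lt_aleph0.trans_le hκr.aleph0_le)))
      have hiks : i ≤ ks := hks i (by simp)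
      have hjks : j ≤ ks := hks j (by simp)
      refine ⟨ks, homOfLE hiks, homOfLE hjks, ?_⟩
      show xi ≫ G.map (homOfLE hiks) = xj ≫ G.map (homOfLE hjks)
      refine TopCat.ext fun a => ?_
      have hka : kf a ≤ ks := hks (kf a) (Or.inl ⟨a, rfl⟩)
      have e1 : (homOfLE hiks : i ⟶ ks) = ff a ≫ homOfLE hka := Subsingleton.elim _ _
      have e2 : (homOfLE hjks : j ⟶ ks) = gf a ≫ homOfLE hka := Subsingleton.elim _ _
      show (G.map (homOfLE hiks)) (xi a) = (G.map (homOfLE hjks)) (xj a)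
      rw [e1, e2, G.map_comp, G.map_comp]
      show (G.map (homOfLE hka)) ((G.map (ff a)) (xi a)) =
        (G.map (homOfLE hka)) ((G.map (gf a)) (xj a))
      exact congrArg _ (hk a)
end
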